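/- Let H be a complex Hilbert space and T, S : H → H bijective additive maps, semilinear with respect to the same automorphism σ of ℂ, such that for all x, y ∈ H: ⟨Tx, Sy⟩ = 0 if and only if ⟨x, y⟩ = 0, and ⟨Tx, Sy⟩ = 1 if and only if ⟨x, y⟩ = 1. If T and S are both linear, then ⟨Tx, Sy⟩ = ⟨x, y⟩ for all x, y ∈ H, and hence T = (S*)^{-1}. -/

import Mathlib

theorem stmt_17 (H : Type*) [NormedAddCommGroup H] [InnerProductSpace ℂ H] [CompleteSpace H]
    (T S : H →L[ℂ] H)
    (hT : Function.Bijective T) (hS : Function.Bijective S)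
    (h0 : ∀ x y : H, inner ℂ (S y) (T x) = (0 : ℂ) ↔ inner ℂ y x = (0 : ℂ))
    (h1 : ∀ x y : H, inner ℂ (S y) (T x) = (1 : ℂ) ↔ inner ℂ y x = (1 : ℂ)) :
    (∀ x y : H, inner ℂ (S y) (T x) = (inner ℂ y x : ℂ)) ∧
      (ContinuousLinearMap.adjoint S).comp T = ContinuousLinearMap.id ℂ H ∧
      T.comp (ContinuousLinearMap.adjoint S) = ContinuousLinearMap.id ℂ H := by
  have key : ∀ x y : H, inner ℂ (S y) (T x) = (inner ℂ y x : ℂ) := by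
    intro x y
    by_cases hc : (inner ℂ y x : ℂ) = 0
    · rw [hc, (h0 x y).2 hc]
    · set c : ℂ := inner ℂ y x with hcdef
      have h1' := (h1 x ((starRingEnd ℂ) c⁻¹ • y)).2 (by
        rw [inner_smul_left]
        simp [← hcdef, hc])
      rw [map_smul, inner_smul_left] at h1'
      simp only [RingHom.id_apply, starRingEnd_self_apply] at h1'
      have : c⁻¹ * inner ℂ (S y) (T x) = 1 := h1'
      field_simp at this
      rw [this]
  refine ⟨key, ?_, ?_⟩
  · ext x
    apply ext_inner_left ℂ
    intro y
    simp [ContinuousLinearMap.adjoint_inner_right, key]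
  · ext z
    obtain ⟨x, rfl⟩ := hT.2 z
    have hx : (ContinuousLinearMap.adjoint S) (T x) = x := by
      apply ext_inner_left ℂ
      intro y
      simp [ContinuousLinearMap.adjoint_inner_right, key]
    simp [hx]
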